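/- Let d_s > 0 be a real number (the planned duration of the suffix cycle), let n ≥ 1, and let t : Fin n → ℝ be the planned satisfaction offsets within one suffix cycle, satisfying 0 ≤ t 0 < t 1 < ⋯ < t (n−1) ≤ d_s. Let J := max( max_{k < n−1} (t (k+1) − t k), d_s + t 0 − t (n−1) ) be the planned maximum time between consecutive satisfactions. Let ρ̲, ρ̄ be reals with 0 < ρ̲ ≤ 1 ≤ ρ̄. Suppose S : ℕ → ℝ gives the actual start times of the suffix cycles, with S (j+1) − S j ≤ ρ̄ · d_s for all j, and suppose τ : ℕ → Fin n → ℝ gives the actual satisfaction times, with S j + ρ̲ · t k ≤ τ j k ≤ S j + ρ̄ · t k for all j and k. Then every gap between consecutive actual satisfaction instants is bounded by ρ̄·J + (ρ̄ − ρ̲)·d_s; that is, for all j and all k < n−1, τ j (k+1) − τ j k ≤ ρ̄·J + (ρ̄ − ρ̲)·d_s, and for all j, τ (j+1) 0 − τ j (n−1) ≤ ρ̄·J + (ρ̄ − ρ̲)·d_s. Consequently the field value of the cost satisfies J(T̃^π) ≤ J(T^π)·ρ̄ + d_s·(ρ̄ − ρ̲). (Proposition 3.) -/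

import Mathlib

/-- Proposition 3: if all robots synchronize globally at the beginning of
each suffix cycle, then every gap between consecutive actual satisfaction
instants of the optimizing proposition is bounded by
`ρ̄·J + (ρ̄ - ρ̲)·d_s`, where `J` is the planned maximum gap. -/
theorem field_cost_bound
    (ds : ℝ) (hds : 0 < ds)
    (n : ℕ) (hn : 0 < n)
    (t : Fin n → ℝ) (htmono : StrictMono t)
    (ht0 : 0 ≤ t ⟨0, hn⟩) (htlast : t ⟨n - 1, by omega⟩ ≤ ds)
    (ρl ρu : ℝ) (hρl : 0 < ρl) (hρl1 : ρl ≤ 1) (hρu : 1 ≤ ρu)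
    (J : ℝ)
    (hJ : J = Finset.univ.sup' (Finset.univ_nonempty_iff.mpr ⟨⟨0, hn⟩⟩)
      (fun k : Fin n =>
        if h : (k : ℕ) + 1 < n then t ⟨(k : ℕ) + 1, h⟩ - t k
        else ds + t ⟨0, hn⟩ - t ⟨n - 1, by omega⟩))
    (S : ℕ → ℝ) (hS : ∀ j, S (j + 1) - S j ≤ ρu * ds)
    (τ : ℕ → Fin n → ℝ)
    (hτ : ∀ j k, S j + ρl * t k ≤ τ j k ∧ τ j k ≤ S j + ρu * t k) :
    (∀ j : ℕ, ∀ k : ℕ, ∀ hk : k + 1 < n,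
      τ j ⟨k + 1, hk⟩ - τ j ⟨k, by omega⟩ ≤ ρu * J + (ρu - ρl) * ds) ∧
    (∀ j : ℕ,
      τ (j + 1) ⟨0, hn⟩ - τ j ⟨n - 1, by omega⟩ ≤ ρu * J + (ρu - ρl) * ds) := by
  have hρ : (0:ℝ) ≤ ρu - ρl := by linarith
  have hρu0 : (0:ℝ) ≤ ρu := by linarith
  have htd : ∀ k : Fin n, t k ≤ ds := by
    intro k
    refine le_trans (htmono.monotone ?_) htlast
    rw [Fin.le_def]; simp; omega
  have htn : ∀ k : Fin n, 0 ≤ t k := by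
    intro k
    refine le_trans ht0 (htmono.monotone ?_)
    rw [Fin.le_def]; simp
  set f : Fin n → ℝ := fun k : Fin n =>
        if h : (k : ℕ) + 1 < n then t ⟨(k : ℕ) + 1, h⟩ - t k
        else ds + t ⟨0, hn⟩ - t ⟨n - 1, by omega⟩ with hf
  have hJ1 : ∀ (k : ℕ) (hk : k + 1 < n), t ⟨k + 1, hk⟩ - t ⟨k, by omega⟩ ≤ J := by
    intro k hk
    rw [hJ]
    have := Finset.le_sup' f (Finset.mem_univ (⟨k, by omega⟩ : Fin n))
    simpa [hf, dif_pos hk, -Finset.le_sup'_iff] using this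
  have hJ2 : ds + t ⟨0, hn⟩ - t ⟨n - 1, by omega⟩ ≤ J := by
    rw [hJ]
    have := Finset.le_sup' f (Finset.mem_univ (⟨n - 1, by omega⟩ : Fin n))
    have h' : ¬ ((n - 1) + 1 < n) := by omega
    simpa [hf, dif_neg h', -Finset.le_sup'_iff] using this
  constructor
  · intro j k hk
    have h1 := (hτ j ⟨k + 1, hk⟩).2
    have h2 := (hτ j ⟨k, by omega⟩).1
    have A : ρu * (t ⟨k + 1, hk⟩ - t ⟨k, by omega⟩) ≤ ρu * J :=
      mul_le_mul_of_nonneg_left (hJ1 k hk) hρu0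
    have B : (ρu - ρl) * t ⟨k, by omega⟩ ≤ (ρu - ρl) * ds :=
      mul_le_mul_of_nonneg_left (htd _) hρ
    nlinarith [A, B]
  · intro j
    have h1 := (hτ (j + 1) ⟨0, hn⟩).2
    have h2 := (hτ j ⟨n - 1, by omega⟩).1
    have hSj := hS j
    have A : ρu * (ds + t ⟨0, hn⟩ - t ⟨n - 1, by omega⟩) ≤ ρu * J :=
      mul_le_mul_of_nonneg_left hJ2 hρu0
    have B : (ρu - ρl) * t ⟨n - 1, by omega⟩ ≤ (ρu - ρl) * ds :=
      mul_le_mul_of_nonneg_left (htd _) hρ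
    nlinarith [A, B]
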